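/- Let L be the model of the free graded Lie algebra on two generators a, b of odd degree described in the context. The family of elements ⁅ad(a)^{i−1}(b), ad(a)^{j−1}(b)⁆, indexed by pairs (i, j) with 1 ≤ i ≤ j such that it is not the case that i = j with i even, is linearly independent and spans L^{(2)}, the part of L of word length 2 in b. Moreover the element indexed by (i, j) lies in L^{(2, i+j)}, and for each n ≥ 2 the elements with i + j = n form a ℚ-basis of L^{(2,n)}. -/

import Mathlib

/-!
Common setup: the free graded Lie algebra on two odd-degree generators `a`, `b`,
modelled inside its universal enveloping algebra `A := FreeAlgebra ℚ (Fin 2)`.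
-/

noncomputable section

namespace Omnibus

/-- The free associative unital `ℚ`-algebra on two generators. -/
abbrev A : Type := FreeAlgebra ℚ (Fin 2)

/-- The first generator, of odd degree. -/
def a : A := FreeAlgebra.ι ℚ 0

/-- The second generator, of odd degree. -/
def b : A := FreeAlgebra.ι ℚ 1

/-- The word (noncommutative monomial) in the letters `a`, `b` associated to a
list of letters. -/
def word (w : List (Fin 2)) : A := (w.map (FreeAlgebra.ι ℚ)).prod

/-- The `ℚ`-basis of `A` given by the words in `a`, `b`. -/
def basisWords : Module.Basis (FreeMonoid (Fin 2)) ℚ A := FreeAlgebra.basisFreeMonoid ℚ (Fin 2)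

/-- The `ℚ`-linear projection of `A` onto the span of the words of odd length,
sending every word of even length to `0`. -/
def pr : A →ₗ[ℚ] A :=
  basisWords.constr ℚ fun w =>
    if Odd (FreeMonoid.toList w).length then word (FreeMonoid.toList w) else 0

/-- The bracket `⁅x,y⁆ = x*y − y*x + 2·(π y)·(π x)`; on elements homogeneous for the
parity grading by word length this is the super-commutator for both generators odd. -/
def br (x y : A) : A := x * y - y * x + 2 * pr y * pr x

/-- A `ℚ`-subspace of `A` closed under the bracket. -/
def IsBracketClosed (S : Submodule ℚ A) : Prop := ∀ x ∈ S, ∀ y ∈ S, br x y ∈ S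

/-- `L`: the smallest `ℚ`-subspace of `A` containing `a`, `b` and closed under the
bracket; a model of the free graded Lie algebra on two odd-degree generators. -/
def L : Submodule ℚ A := sInf {S : Submodule ℚ A | a ∈ S ∧ b ∈ S ∧ IsBracketClosed S}

/-- The span of the set of words `w` satisfying a property `P`. -/
def wordsSpan (P : List (Fin 2) → Prop) : Submodule ℚ A :=
  Submodule.span ℚ (word '' {w | P w})

/-- `L^{(k)}`: the part of `L` of word length `k` in `b`. -/
def Lk (k : ℕ) : Submodule ℚ A := L ⊓ wordsSpan fun w => w.count 1 = k

/-- `L^{(k,n)}`: the part of `L` of word length `k` in `b` and total word length `n`. -/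
def Lkn (k n : ℕ) : Submodule ℚ A :=
  L ⊓ wordsSpan fun w => w.count 1 = k ∧ w.length = n

/-- The `j`-fold iterated adjoint map `ad(x)^j(y)`. -/
def adIter (x : A) (j : ℕ) (y : A) : A := (br x)^[j] y

end Omnibus

namespace Omnibus

/-- The admissible index pairs `(i,j)`: `1 ≤ i ≤ j` and not (`i = j` with `i` even). -/
def idxOK (p : ℕ × ℕ) : Prop := 1 ≤ p.1 ∧ p.1 ≤ p.2 ∧ ¬(p.1 = p.2 ∧ Even p.1)

/-- The element `⁅ad(a)^{i−1}(b), ad(a)^{j−1}(b)⁆` indexed by the pair `(i,j)`. -/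
def pairElt (p : ℕ × ℕ) : A := br (adIter a (p.1 - 1) b) (adIter a (p.2 - 1) b)

end Omnibus

namespace Omnibus

theorem word_mul (u v : List (Fin 2)) : word u * word v = word (u ++ v) := by
  simp [word, List.prod_append]

theorem basisWords_apply (m : FreeMonoid (Fin 2)) : basisWords m = word (FreeMonoid.toList m) := by
  rw [basisWords, FreeAlgebra.basisFreeMonoid, Module.Basis.map_apply, Finsupp.coe_basisSingleOne]
  show (FreeAlgebra.equivMonoidAlgebraFreeMonoid).symm.toLinearEquiv (MonoidAlgebra.of ℚ (FreeMonoid (Fin 2)) m) = _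
  rw [AlgEquiv.toLinearEquiv_apply]
  induction m using FreeMonoid.recOn with
  | one =>
      rw [show ((MonoidAlgebra.of ℚ (FreeMonoid (Fin 2))) 1) = 1 from map_one _, map_one]
      simp [word]
  | of_mul x xs ih =>
      rw [map_mul, map_mul, ih]
      have h1 : FreeAlgebra.equivMonoidAlgebraFreeMonoid.symm
          ((MonoidAlgebra.of ℚ (FreeMonoid (Fin 2))) (FreeMonoid.of x)) = FreeAlgebra.ι ℚ x := by
        rw [show (MonoidAlgebra.of ℚ (FreeMonoid (Fin 2))) (FreeMonoid.of x)
            = FreeAlgebra.equivMonoidAlgebraFreeMonoid (FreeAlgebra.ι ℚ x) by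
          simp [FreeAlgebra.equivMonoidAlgebraFreeMonoid]]
        exact AlgEquiv.symm_apply_apply _ _
      rw [h1]
      show _ = word (x :: FreeMonoid.toList xs)
      simp [word]

theorem word_eq_basis (w : List (Fin 2)) : word w = basisWords (FreeMonoid.ofList w) := by
  rw [basisWords_apply, FreeMonoid.toList_ofList]

theorem pr_word (w : List (Fin 2)) : pr (word w) = if Odd w.length then word w else 0 := by
  rw [word_eq_basis, pr, Module.Basis.constr_basis, FreeMonoid.toList_ofList, word_eq_basis]

/-- generic projection onto span of words satisfying Q -/
def projL (Q : List (Fin 2) → Prop) [DecidablePred Q] : A →ₗ[ℚ] A :=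
  basisWords.constr ℚ fun m => if Q (FreeMonoid.toList m) then word (FreeMonoid.toList m) else 0

theorem projL_word (Q : List (Fin 2) → Prop) [DecidablePred Q] (w : List (Fin 2)) :
    projL Q (word w) = if Q w then word w else 0 := by
  rw [word_eq_basis, projL, Module.Basis.constr_basis, FreeMonoid.toList_ofList, word_eq_basis]

def coordAt (w : List (Fin 2)) : A →ₗ[ℚ] ℚ := basisWords.coord (FreeMonoid.ofList w)

theorem coordAt_word (w₀ w : List (Fin 2)) :
    coordAt w₀ (word w) = if w = w₀ then 1 else 0 := by
  rw [word_eq_basis, coordAt, Module.Basis.coord_apply, Module.Basis.repr_self]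
  classical
  rw [Finsupp.single_apply]
  by_cases h : w = w₀
  · subst h; simp
  · rw [if_neg h, if_neg (fun hh => h (by
      simpa [FreeMonoid.toList_ofList] using congrArg FreeMonoid.toList hh))]

theorem word_mem_wordsSpan {P : List (Fin 2) → Prop} {w : List (Fin 2)} (h : P w) :
    word w ∈ wordsSpan P := Submodule.subset_span ⟨w, h, rfl⟩

theorem wordsSpan_mono {P Q : List (Fin 2) → Prop} (h : ∀ w, P w → Q w) :
    wordsSpan P ≤ wordsSpan Q :=
  Submodule.span_mono (fun x ⟨w, hw, hx⟩ => ⟨w, h w hw, hx⟩)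

theorem projL_eq_self {Q : List (Fin 2) → Prop} [DecidablePred Q] {x : A}
    (hx : x ∈ wordsSpan Q) : projL Q x = x := by
  induction hx using Submodule.span_induction with
  | mem y hy => obtain ⟨w, hw, rfl⟩ := hy; rw [projL_word]; exact if_pos hw
  | zero => simp
  | add y z _ _ hy hz => rw [map_add, hy, hz]
  | smul c y _ hy => rw [map_smul, hy]

theorem projL_eq_zero {P Q : List (Fin 2) → Prop} [DecidablePred Q] {x : A}
    (hx : x ∈ wordsSpan P) (h : ∀ w, P w → ¬ Q w) : projL Q x = 0 := by
  induction hx using Submodule.span_induction with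
  | mem y hy => obtain ⟨w, hw, rfl⟩ := hy; rw [projL_word, if_neg (h w hw)]
  | zero => simp
  | add y z _ _ hy hz => rw [map_add, hy, hz]; simp
  | smul c y _ hy => rw [map_smul, hy]; simp

theorem coordAt_eq_zero {P : List (Fin 2) → Prop} {w₀ : List (Fin 2)} {x : A}
    (hx : x ∈ wordsSpan P) (h : ¬ P w₀) : coordAt w₀ x = 0 := by
  induction hx using Submodule.span_induction with
  | mem y hy =>
      obtain ⟨w, hw, rfl⟩ := hy; rw [coordAt_word, if_neg]
      rintro rfl; exact h hw
  | zero => simp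
  | add y z _ _ hy hz => rw [map_add, hy, hz]; simp
  | smul c y _ hy => rw [map_smul, hy]; simp

theorem pr_eq_projL (x : A) : pr x = projL (fun w => Odd w.length) x := rfl

theorem pr_eq_self {n : ℕ} {x : A} (hx : x ∈ wordsSpan (fun w => w.length = n)) (hn : Odd n) :
    pr x = x := by
  rw [pr_eq_projL]
  induction hx using Submodule.span_induction with
  | mem y hy => obtain ⟨w, hw, rfl⟩ := hy; rw [projL_word]; exact if_pos (by rw [Set.mem_setOf_eq] at hw; rw [hw]; exact hn)
  | zero => simp
  | add y z _ _ hy hz => rw [map_add, hy, hz]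
  | smul c y _ hy => rw [map_smul, hy]

theorem pr_eq_zero {n : ℕ} {x : A} (hx : x ∈ wordsSpan (fun w => w.length = n)) (hn : ¬ Odd n) :
    pr x = 0 := by
  rw [pr_eq_projL]
  exact projL_eq_zero hx (fun w hw => hw ▸ hn)

theorem br_add_left (x y z : A) : br (x + y) z = br x z + br y z := by
  simp only [br, map_add]; noncomm_ring
theorem br_add_right (x y z : A) : br x (y + z) = br x y + br x z := by
  simp only [br, map_add]; noncomm_ring
theorem br_smul_left (c : ℚ) (x z : A) : br (c • x) z = c • br x z := by
  simp only [br, map_smul, smul_mul_assoc, mul_smul_comm]; module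
theorem br_smul_right (c : ℚ) (x z : A) : br x (c • z) = c • br x z := by
  simp only [br, map_smul, smul_mul_assoc, mul_smul_comm]; module
theorem br_zero (x : A) : br x 0 = 0 := by simp [br]
theorem zero_br (x : A) : br 0 x = 0 := by simp [br]

/-- bracketing maps spans into a submodule if generators do -/
theorem br_span_mem {S T : Set A} {U : Submodule ℚ A}
    (h : ∀ g ∈ S, ∀ g' ∈ T, br g g' ∈ U) {x y : A}
    (hx : x ∈ Submodule.span ℚ S) (hy : y ∈ Submodule.span ℚ T) : br x y ∈ U := by
  induction hx using Submodule.span_induction with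
  | mem g hg =>
      induction hy using Submodule.span_induction with
      | mem g' hg' => exact h g hg g' hg'
      | zero => rw [br_zero]; exact U.zero_mem
      | add u v _ _ hu hv => rw [br_add_right]; exact U.add_mem hu hv
      | smul c u _ hu => rw [br_smul_right]; exact U.smul_mem c hu
  | zero => rw [zero_br]; exact U.zero_mem
  | add u v _ _ hu hv => rw [br_add_left]; exact U.add_mem hu hv
  | smul c u _ hu => rw [br_smul_left]; exact U.smul_mem c hu

theorem mul_mem_wordsSpan {P Q R : List (Fin 2) → Prop}
    (h : ∀ u v, P u → Q v → R (u ++ v)) {x y : A}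
    (hx : x ∈ wordsSpan P) (hy : y ∈ wordsSpan Q) : x * y ∈ wordsSpan R := by
  induction hx using Submodule.span_induction with
  | mem g hg =>
      obtain ⟨u, hu, rfl⟩ := hg
      induction hy using Submodule.span_induction with
      | mem g' hg' =>
          obtain ⟨v, hv, rfl⟩ := hg'
          rw [word_mul]; exact word_mem_wordsSpan (h u v hu hv)
      | zero => rw [mul_zero]; exact Submodule.zero_mem _
      | add u' v' _ _ hu' hv' => rw [mul_add]; exact Submodule.add_mem _ hu' hv'
      | smul c u' _ hu' => rw [mul_smul_comm]; exact Submodule.smul_mem _ c hu'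
  | zero => rw [zero_mul]; exact Submodule.zero_mem _
  | add u v _ _ hu hv => rw [add_mul]; exact Submodule.add_mem _ hu hv
  | smul c u _ hu => rw [smul_mul_assoc]; exact Submodule.smul_mem _ c hu

theorem pr_mem_wordsSpan {P : List (Fin 2) → Prop} {x : A}
    (hx : x ∈ wordsSpan P) : pr x ∈ wordsSpan P := by
  induction hx using Submodule.span_induction with
  | mem g hg =>
      obtain ⟨u, hu, rfl⟩ := hg
      rw [pr_word]
      split
      · exact word_mem_wordsSpan hu
      · exact Submodule.zero_mem _
  | zero => rw [map_zero]; exact Submodule.zero_mem _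
  | add u v _ _ hu hv => rw [map_add]; exact Submodule.add_mem _ hu hv
  | smul c u _ hu => rw [map_smul]; exact Submodule.smul_mem _ c hu

theorem br_mem_wordsSpan {P Q R : List (Fin 2) → Prop}
    (h1 : ∀ u v, P u → Q v → R (u ++ v)) (h2 : ∀ u v, Q u → P v → R (u ++ v)) {x y : A}
    (hx : x ∈ wordsSpan P) (hy : y ∈ wordsSpan Q) : br x y ∈ wordsSpan R := by
  refine Submodule.add_mem _ (Submodule.sub_mem _ ?_ ?_) ?_
  · exact mul_mem_wordsSpan h1 hx hy
  · exact mul_mem_wordsSpan h2 hy hx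
  · rw [show (2 : A) * pr y * pr x = (2:ℚ) • (pr y * pr x) by
      rw [two_smul]; rw [two_mul]; rw [add_mul]]
    exact Submodule.smul_mem _ _ (mul_mem_wordsSpan h2 (pr_mem_wordsSpan hy) (pr_mem_wordsSpan hx))

/-- graded pieces: words with `count 1 = k` and `length = n` -/
def V (k n : ℕ) : Submodule ℚ A := wordsSpan fun w => w.count 1 = k ∧ w.length = n

theorem V_le_len (k n : ℕ) : V k n ≤ wordsSpan fun w => w.length = n :=
  wordsSpan_mono fun _ hw => hw.2

theorem br_mem_V {k l m n : ℕ} {x y : A} (hx : x ∈ V k m) (hy : y ∈ V l n) :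
    br x y ∈ V (k + l) (m + n) := by
  refine br_mem_wordsSpan ?_ ?_ hx hy <;>
  · rintro u v ⟨hu1, hu2⟩ ⟨hv1, hv2⟩
    constructor <;> simp [List.count_append, List.length_append, hu1, hu2, hv1, hv2] <;> omega

theorem a_mem_V : a ∈ V 0 1 := by
  have : a = word [0] := by simp [a, word]
  rw [this]; exact word_mem_wordsSpan (by simp)

theorem b_mem_V : b ∈ V 1 1 := by
  have : b = word [1] := by simp [b, word]
  rw [this]; exact word_mem_wordsSpan (by simp [List.count_cons])

/-- `Bb m = ad(a)^m b`, the basic elements of `L^{(1)}`, of length `m+1`. -/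
def Bb (m : ℕ) : A := adIter a m b

theorem Bb_zero : Bb 0 = b := rfl
theorem Bb_succ (m : ℕ) : Bb (m + 1) = br a (Bb m) := by
  rw [Bb, Bb, adIter, adIter, Function.iterate_succ_apply']

theorem Bb_mem_V (m : ℕ) : Bb m ∈ V 1 (m + 1) := by
  induction m with
  | zero => exact b_mem_V
  | succ m ih =>
      rw [Bb_succ]
      have h := br_mem_V a_mem_V ih
      rw [show (0:ℕ)+1=1 from rfl, show 1+(m+1) = m+1+1 by omega] at h
      exact h

theorem pr_a : pr a = a := by
  have h := pr_eq_self (n := 1) (V_le_len 0 1 a_mem_V) (by norm_num)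
  exact h

theorem pr_V {k n : ℕ} {x : A} (hx : x ∈ V k n) :
    pr x = if Odd n then x else 0 := by
  by_cases h : Odd n
  · rw [if_pos h]; exact pr_eq_self (V_le_len k n hx) h
  · rw [if_neg h]; exact pr_eq_zero (V_le_len k n hx) h

theorem mul_mem_V {k l m n : ℕ} {x y : A} (hx : x ∈ V k m) (hy : y ∈ V l n) :
    x * y ∈ V (k + l) (m + n) := by
  refine mul_mem_wordsSpan ?_ hx hy
  rintro u v ⟨hu1, hu2⟩ ⟨hv1, hv2⟩
  constructor <;> simp [List.count_append, List.length_append, hu1, hu2, hv1, hv2]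

theorem pr_aa : pr (a * a) = 0 := by
  have h := pr_V (mul_mem_V a_mem_V a_mem_V)
  rw [if_neg (by rw [Nat.odd_iff]; omega)] at h
  exact h

theorem br_swap_of_pr_zero {x y : A} (h : pr y = 0) : br x y = - br y x := by
  rw [br, br, h]; noncomm_ring

theorem br_swap_odd {x y : A} (hx : pr x = x) (hy : pr y = y) : br x y = br y x := by
  rw [br, br, hx, hy]; noncomm_ring

theorem br_self_of_pr_zero {x : A} (h : pr x = 0) : br x x = 0 := by
  rw [br, h]; noncomm_ring

theorem br_x_a_odd {x : A} (hx : pr x = x) : br x a = br a x := br_swap_odd hx pr_a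
theorem br_x_a_even {x : A} (hx : pr x = 0) : br x a = - br a x := by
  rw [br_swap_of_pr_zero (x := a) hx, neg_neg]
theorem br_x_aa {x : A} : br x (a * a) = - br (a * a) x := br_swap_of_pr_zero pr_aa

/-- `br (a*a) x = br a (br a x)` for length-homogeneous `x`. -/
theorem br_aa_eq {k n : ℕ} {x : A} (hx : x ∈ V k n) :
    br (a * a) x = br a (br a x) := by
  have hx' := pr_V hx
  have hax := pr_V (br_mem_V a_mem_V hx)
  rcases Nat.even_or_odd n with hn | hn
  · rw [Nat.even_iff] at hn
    rw [if_neg (by rw [Nat.odd_iff]; omega)] at hx'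
    rw [if_pos (by rw [Nat.odd_iff]; omega)] at hax
    rw [show br a (br a x) = a * br a x - br a x * a + 2 * pr (br a x) * pr a from rfl, hax, pr_a]
    rw [show br (a*a) x = (a*a) * x - x * (a*a) + 2 * pr x * pr (a*a) from rfl, pr_aa, hx']
    rw [show br a x = a * x - x * a + 2 * pr x * pr a from rfl, hx', pr_a]
    noncomm_ring
  · rw [Nat.odd_iff] at hn
    rw [if_pos (by rw [Nat.odd_iff]; omega)] at hx'
    rw [if_neg (by rw [Nat.odd_iff]; omega)] at hax
    rw [show br a (br a x) = a * br a x - br a x * a + 2 * pr (br a x) * pr a from rfl, hax]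
    rw [show br (a*a) x = (a*a) * x - x * (a*a) + 2 * pr x * pr (a*a) from rfl, pr_aa, hx']
    rw [show br a x = a * x - x * a + 2 * pr x * pr a from rfl, hx', pr_a]
    noncomm_ring

/-- `D p q = ⁅ad(a)^p b, ad(a)^q b⁆` (zero-based indices). -/
def D (p q : ℕ) : A := br (Bb p) (Bb q)

theorem br_a_D (p q : ℕ) : br a (D p q) = D (p+1) q + ((-1:ℚ))^(p+1) • D p (q+1) := by
  have hx := pr_V (Bb_mem_V p)
  have hy := pr_V (Bb_mem_V q)
  have hxy := pr_V (br_mem_V (Bb_mem_V p) (Bb_mem_V q))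
  have hax := pr_V (br_mem_V a_mem_V (Bb_mem_V p))
  have hay := pr_V (br_mem_V a_mem_V (Bb_mem_V q))
  rw [D, D, D, Bb_succ, Bb_succ]
  rcases Nat.even_or_odd p with hp | hp <;> rcases Nat.even_or_odd q with hq | hq
  · rw [Nat.even_iff] at hp
    rw [Nat.even_iff] at hq
    rw [if_pos (by rw [Nat.odd_iff]; omega)] at hx
    rw [if_pos (by rw [Nat.odd_iff]; omega)] at hy
    rw [if_neg (by rw [Nat.odd_iff]; omega)] at hxy
    rw [if_neg (by rw [Nat.odd_iff]; omega)] at hax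
    rw [if_neg (by rw [Nat.odd_iff]; omega)] at hay
    rw [show ((-1:ℚ))^(p+1) = -1 from Odd.neg_one_pow (by rw [Nat.odd_iff]; omega), neg_one_smul]
    rw [show br a (br (Bb p) (Bb q)) = a * br (Bb p) (Bb q) - br (Bb p) (Bb q) * a + 2 * pr (br (Bb p) (Bb q)) * pr a from rfl, hxy, pr_a]
    rw [show br (br a (Bb p)) (Bb q) = br a (Bb p) * Bb q - Bb q * br a (Bb p) + 2 * pr (Bb q) * pr (br a (Bb p)) from rfl, hax, hy]
    rw [show br (Bb p) (br a (Bb q)) = Bb p * br a (Bb q) - br a (Bb q) * Bb p + 2 * pr (br a (Bb q)) * pr (Bb p) from rfl, hay, hx]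
    rw [show br (Bb p) (Bb q) = Bb p * Bb q - Bb q * Bb p + 2 * pr (Bb q) * pr (Bb p) from rfl, hx, hy]
    rw [show br a (Bb p) = a * Bb p - Bb p * a + 2 * pr (Bb p) * pr a from rfl, hx, pr_a]
    rw [show br a (Bb q) = a * Bb q - Bb q * a + 2 * pr (Bb q) * pr a from rfl, hy, pr_a]
    noncomm_ring
  · rw [Nat.even_iff] at hp
    rw [Nat.odd_iff] at hq
    rw [if_pos (by rw [Nat.odd_iff]; omega)] at hx
    rw [if_neg (by rw [Nat.odd_iff]; omega)] at hy
    rw [if_pos (by rw [Nat.odd_iff]; omega)] at hxy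
    rw [if_neg (by rw [Nat.odd_iff]; omega)] at hax
    rw [if_pos (by rw [Nat.odd_iff]; omega)] at hay
    rw [show ((-1:ℚ))^(p+1) = -1 from Odd.neg_one_pow (by rw [Nat.odd_iff]; omega), neg_one_smul]
    rw [show br a (br (Bb p) (Bb q)) = a * br (Bb p) (Bb q) - br (Bb p) (Bb q) * a + 2 * pr (br (Bb p) (Bb q)) * pr a from rfl, hxy, pr_a]
    rw [show br (br a (Bb p)) (Bb q) = br a (Bb p) * Bb q - Bb q * br a (Bb p) + 2 * pr (Bb q) * pr (br a (Bb p)) from rfl, hax, hy]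
    rw [show br (Bb p) (br a (Bb q)) = Bb p * br a (Bb q) - br a (Bb q) * Bb p + 2 * pr (br a (Bb q)) * pr (Bb p) from rfl, hay, hx]
    rw [show br (Bb p) (Bb q) = Bb p * Bb q - Bb q * Bb p + 2 * pr (Bb q) * pr (Bb p) from rfl, hx, hy]
    rw [show br a (Bb p) = a * Bb p - Bb p * a + 2 * pr (Bb p) * pr a from rfl, hx, pr_a]
    rw [show br a (Bb q) = a * Bb q - Bb q * a + 2 * pr (Bb q) * pr a from rfl, hy, pr_a]
    noncomm_ring
  · rw [Nat.odd_iff] at hp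
    rw [Nat.even_iff] at hq
    rw [if_neg (by rw [Nat.odd_iff]; omega)] at hx
    rw [if_pos (by rw [Nat.odd_iff]; omega)] at hy
    rw [if_pos (by rw [Nat.odd_iff]; omega)] at hxy
    rw [if_pos (by rw [Nat.odd_iff]; omega)] at hax
    rw [if_neg (by rw [Nat.odd_iff]; omega)] at hay
    rw [show ((-1:ℚ))^(p+1) = 1 from Even.neg_one_pow (by rw [Nat.even_iff]; omega), one_smul]
    rw [show br a (br (Bb p) (Bb q)) = a * br (Bb p) (Bb q) - br (Bb p) (Bb q) * a + 2 * pr (br (Bb p) (Bb q)) * pr a from rfl, hxy, pr_a]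
    rw [show br (br a (Bb p)) (Bb q) = br a (Bb p) * Bb q - Bb q * br a (Bb p) + 2 * pr (Bb q) * pr (br a (Bb p)) from rfl, hax, hy]
    rw [show br (Bb p) (br a (Bb q)) = Bb p * br a (Bb q) - br a (Bb q) * Bb p + 2 * pr (br a (Bb q)) * pr (Bb p) from rfl, hay, hx]
    rw [show br (Bb p) (Bb q) = Bb p * Bb q - Bb q * Bb p + 2 * pr (Bb q) * pr (Bb p) from rfl, hx, hy]
    rw [show br a (Bb p) = a * Bb p - Bb p * a + 2 * pr (Bb p) * pr a from rfl, hx, pr_a]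
    rw [show br a (Bb q) = a * Bb q - Bb q * a + 2 * pr (Bb q) * pr a from rfl, hy, pr_a]
    noncomm_ring
  · rw [Nat.odd_iff] at hp
    rw [Nat.odd_iff] at hq
    rw [if_neg (by rw [Nat.odd_iff]; omega)] at hx
    rw [if_neg (by rw [Nat.odd_iff]; omega)] at hy
    rw [if_neg (by rw [Nat.odd_iff]; omega)] at hxy
    rw [if_pos (by rw [Nat.odd_iff]; omega)] at hax
    rw [if_pos (by rw [Nat.odd_iff]; omega)] at hay
    rw [show ((-1:ℚ))^(p+1) = 1 from Even.neg_one_pow (by rw [Nat.even_iff]; omega), one_smul]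
    rw [show br a (br (Bb p) (Bb q)) = a * br (Bb p) (Bb q) - br (Bb p) (Bb q) * a + 2 * pr (br (Bb p) (Bb q)) * pr a from rfl, hxy, pr_a]
    rw [show br (br a (Bb p)) (Bb q) = br a (Bb p) * Bb q - Bb q * br a (Bb p) + 2 * pr (Bb q) * pr (br a (Bb p)) from rfl, hax, hy]
    rw [show br (Bb p) (br a (Bb q)) = Bb p * br a (Bb q) - br a (Bb q) * Bb p + 2 * pr (br a (Bb q)) * pr (Bb p) from rfl, hay, hx]
    rw [show br (Bb p) (Bb q) = Bb p * Bb q - Bb q * Bb p + 2 * pr (Bb q) * pr (Bb p) from rfl, hx, hy]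
    rw [show br a (Bb p) = a * Bb p - Bb p * a + 2 * pr (Bb p) * pr a from rfl, hx, pr_a]
    rw [show br a (Bb q) = a * Bb q - Bb q * a + 2 * pr (Bb q) * pr a from rfl, hy, pr_a]
    noncomm_ring

theorem br_a_Bb (m : ℕ) : Bb (m+1) = a * Bb m + ((-1:ℚ)^m) • (Bb m * a) := by
  rw [Bb_succ]
  have hx := pr_V (Bb_mem_V m)
  rcases Nat.even_or_odd m with hm | hm
  · rw [Nat.even_iff] at hm
    rw [if_pos (by rw [Nat.odd_iff]; omega)] at hx
    rw [show ((-1:ℚ))^m = 1 from Even.neg_one_pow (by rw [Nat.even_iff]; omega), one_smul]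
    rw [show br a (Bb m) = a * Bb m - Bb m * a + 2 * pr (Bb m) * pr a from rfl, hx, pr_a]
    noncomm_ring
  · rw [Nat.odd_iff] at hm
    rw [if_neg (by rw [Nat.odd_iff]; omega)] at hx
    rw [show ((-1:ℚ))^m = -1 from Odd.neg_one_pow (by rw [Nat.odd_iff]; omega), neg_one_smul]
    rw [show br a (Bb m) = a * Bb m - Bb m * a + 2 * pr (Bb m) * pr a from rfl, hx, pr_a]
    noncomm_ring

/-- coefficients of `Bb m` in the word basis -/
def cc : ℕ → ℕ → ℚ
  | 0, 0 => 1
  | 0, _ + 1 => 0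
  | m + 1, 0 => cc m 0
  | m + 1, s + 1 => cc m (s+1) + (-1)^m * cc m s

@[simp] theorem cc_zero (m : ℕ) : cc m 0 = 1 := by
  induction m with
  | zero => rfl
  | succ m ih => rw [cc, ih]

theorem cc_succ_succ (m s : ℕ) : cc (m+1) (s+1) = cc m (s+1) + (-1)^m * cc m s := rfl

theorem cc_gt {m s : ℕ} (h : m < s) : cc m s = 0 := by
  induction m generalizing s with
  | zero => obtain ⟨s, rfl⟩ := Nat.exists_eq_add_of_lt h; rfl
  | succ m ih =>
      obtain ⟨t, rfl⟩ := Nat.exists_eq_succ_of_ne_zero (by omega : s ≠ 0)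
      rw [cc_succ_succ, ih (by omega), ih (by omega)]
      ring

/-- the word `a^r b a^s` -/
def ww (r s : ℕ) : A := word (List.replicate r 0 ++ 1 :: List.replicate s 0)

theorem a_mul_ww (r s : ℕ) : a * ww r s = ww (r+1) s := by
  rw [show a = word [0] by simp [a, word], ww, ww, word_mul]
  simp [List.replicate_succ]

theorem ww_mul_a (r s : ℕ) : ww r s * a = ww r (s+1) := by
  rw [show a = word [0] by simp [a, word], ww, ww, word_mul]
  simp [List.replicate_succ']

theorem Bb_expand (m : ℕ) :
    Bb m = ∑ s ∈ Finset.range (m+1), cc m s • ww (m-s) s := by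
  induction m with
  | zero => simp [Bb_zero, ww, b, word]
  | succ m ih =>
      rw [br_a_Bb, ih, Finset.mul_sum, Finset.sum_mul]
      have h1 : ∀ s ∈ Finset.range (m+1),
          a * (cc m s • ww (m-s) s) = cc m s • ww (m+1-s) s := by
        intro s hs
        rw [Finset.mem_range] at hs
        rw [mul_smul_comm, a_mul_ww, show m - s + 1 = m + 1 - s by omega]
      have h2 : ∀ s ∈ Finset.range (m+1),
          (cc m s • ww (m-s) s) * a = cc m s • ww (m-s) (s+1) := by
        intro s _
        rw [smul_mul_assoc, ww_mul_a]
      rw [Finset.sum_congr rfl h1, Finset.sum_congr rfl h2]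
      -- normalize LHS first sum
      rw [Finset.sum_range_succ' (fun s => cc m s • ww (m+1-s) s) m]
      have h1' : ∀ s ∈ Finset.range m,
          cc m (s+1) • ww (m+1-(s+1)) (s+1) = cc m (s+1) • ww (m-s) (s+1) := by
        intro s _; rw [show m+1-(s+1) = m - s by omega]
      rw [Finset.sum_congr rfl h1']
      -- normalize RHS
      rw [Finset.sum_range_succ' (fun s => cc (m+1) s • ww (m+1-s) s) (m+1)]
      have h3 : ∀ s ∈ Finset.range (m+1),
          cc (m+1) (s+1) • ww (m+1-(s+1)) (s+1)
            = cc m (s+1) • ww (m-s) (s+1) + (-1:ℚ)^m • (cc m s • ww (m-s) (s+1)) := by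
        intro s _
        rw [cc_succ_succ, add_smul, show m+1-(s+1) = m - s by omega, smul_smul]
      rw [Finset.sum_congr rfl h3, Finset.sum_add_distrib]
      rw [Finset.sum_range_succ (fun s => cc m (s+1) • ww (m-s) (s+1)) m]
      rw [cc_gt (by omega : m < m + 1), zero_smul, add_zero]
      rw [← Finset.smul_sum]
      rw [show cc (m+1) 0 = cc m 0 from rfl]
      rw [show m+1-0 = m+1 by omega]
      module

theorem rep_one_eq_iff {p q : ℕ} {u v : List (Fin 2)} :
    (List.replicate p (0:Fin 2) ++ 1 :: u = List.replicate q 0 ++ 1 :: v) ↔ (p = q ∧ u = v) := by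
  constructor
  · intro h
    induction p generalizing q with
    | zero =>
        cases q with
        | zero => simpa using h
        | succ q => rw [List.replicate_succ] at h; simp at h
    | succ p ih =>
        cases q with
        | zero => rw [List.replicate_succ] at h; simp at h
        | succ q =>
            rw [List.replicate_succ, List.replicate_succ] at h
            simp only [List.cons_append, List.cons.injEq] at h
            obtain ⟨hp, hu⟩ := ih h.2
            exact ⟨by omega, hu⟩
  · rintro ⟨rfl, rfl⟩; rfl

/-- the test word `a^l b a^k b` -/
def T (l k : ℕ) : List (Fin 2) := List.replicate l 0 ++ 1 :: (List.replicate k 0 ++ [1])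

theorem T_length (l k : ℕ) : (T l k).length = l + k + 2 := by
  simp [T]; omega

theorem T_count (l k : ℕ) : (T l k).count 1 = 2 := by
  simp [T, List.count_cons, List.count_append, List.count_replicate]

/-- key list computation -/
theorem concat_eq_T_iff {p s q t l k : ℕ} (hs : s ≤ p) (ht : t ≤ q) :
    ((List.replicate (p-s) (0:Fin 2) ++ 1 :: List.replicate s 0)
      ++ (List.replicate (q-t) 0 ++ 1 :: List.replicate t 0) = T l k)
      ↔ (p - s = l ∧ s + (q-t) = k ∧ t = 0) := by
  rw [T, show (List.replicate (p-s) (0:Fin 2) ++ 1 :: List.replicate s 0)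
      ++ (List.replicate (q-t) 0 ++ 1 :: List.replicate t 0)
      = List.replicate (p-s) (0:Fin 2)
        ++ 1 :: (List.replicate (s + (q-t)) 0 ++ 1 :: List.replicate t 0) by
    rw [List.replicate_add]
    simp only [List.cons_append, List.append_assoc]]
  rw [rep_one_eq_iff]
  constructor
  · rintro ⟨h1, h2⟩
    rw [show ([1] : List (Fin 2)) = 1 :: List.replicate 0 0 from rfl, rep_one_eq_iff] at h2
    refine ⟨h1, h2.1, ?_⟩
    have := congrArg List.length h2.2
    simpa using this
  · rintro ⟨h1, h2, rfl⟩
    refine ⟨h1, ?_⟩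
    rw [← h2]
    simp

theorem coord_Bb_mul (p q l k : ℕ) :
    coordAt (T l k) (Bb p * Bb q) = if l ≤ p ∧ p + q = l + k then cc p (p - l) else 0 := by
  rw [Bb_expand p, Bb_expand q, Finset.sum_mul_sum]
  simp only [map_sum]
  have hterm : ∀ s ∈ Finset.range (p+1), ∀ t ∈ Finset.range (q+1),
      coordAt (T l k) ((cc p s • ww (p-s) s) * (cc q t • ww (q-t) t))
        = (cc p s * cc q t) * (if p - s = l ∧ s + (q-t) = k ∧ t = 0 then 1 else 0) := by
    intro s hs t ht
    rw [Finset.mem_range] at hs ht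
    rw [smul_mul_assoc, mul_smul_comm, map_smul, map_smul, ww, ww, word_mul, coordAt_word,
        smul_eq_mul, smul_eq_mul]
    simp only [concat_eq_T_iff (show s ≤ p by omega) (show t ≤ q by omega)]
    ring
  rw [Finset.sum_congr rfl (fun s hs => Finset.sum_congr rfl (fun t ht => hterm s hs t ht))]
  by_cases H : l ≤ p ∧ p + q = l + k
  · rw [if_pos H]
    obtain ⟨H1, H2⟩ := H
    rw [Finset.sum_eq_single (p - l)]
    · rw [Finset.sum_eq_single 0]
      · rw [if_pos ⟨by omega, by omega, rfl⟩, cc_zero, mul_one, mul_one]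
      · intro t _ ht0
        rw [if_neg (fun h => ht0 h.2.2), mul_zero]
      · intro h; exact absurd (Finset.mem_range.mpr (by omega)) h
    · intro s hs hsne
      rw [Finset.mem_range] at hs
      apply Finset.sum_eq_zero
      intro t _
      rw [if_neg (fun h => hsne (by omega)), mul_zero]
    · intro h; exact absurd (Finset.mem_range.mpr (by omega)) h
  · rw [if_neg H]
    apply Finset.sum_eq_zero; intro s hs
    apply Finset.sum_eq_zero; intro t ht
    rw [Finset.mem_range] at hs ht
    rw [if_neg, mul_zero]
    rintro ⟨h1, h2, rfl⟩
    exact H ⟨by omega, by omega⟩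

theorem coordAt_two_mul (w : List (Fin 2)) (z : A) :
    coordAt w (2 * z) = 2 * coordAt w z := by
  rw [two_mul, map_add]; ring

theorem coord_D (p q l k : ℕ) : coordAt (T l k) (D p q) =
    (if l ≤ p ∧ p + q = l + k then cc p (p-l) else 0)
    - (if l ≤ q ∧ q + p = l + k then cc q (q-l) else 0)
    + (if p % 2 = 0 ∧ q % 2 = 0
        then 2 * (if l ≤ q ∧ q + p = l + k then cc q (q-l) else 0) else 0) := by
  have hx := pr_V (Bb_mem_V p)
  have hy := pr_V (Bb_mem_V q)
  rw [D, show br (Bb p) (Bb q)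
      = Bb p * Bb q - Bb q * Bb p + 2 * pr (Bb q) * pr (Bb p) from rfl]
  rw [map_add, map_sub, coord_Bb_mul, coord_Bb_mul]
  congr 1
  by_cases hpq : p % 2 = 0 ∧ q % 2 = 0
  · rw [if_pos hpq]
    rw [if_pos (by rw [Nat.odd_iff]; omega)] at hx
    rw [if_pos (by rw [Nat.odd_iff]; omega)] at hy
    rw [hx, hy, mul_assoc, coordAt_two_mul, coord_Bb_mul]
  · rw [if_neg hpq]
    obtain h | h : p % 2 = 1 ∨ q % 2 = 1 := by omega
    · rw [if_neg (by rw [Nat.odd_iff]; omega)] at hx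
      rw [hx, mul_zero, map_zero]
    · rw [if_neg (by rw [Nat.odd_iff]; omega)] at hy
      rw [hy, mul_zero, zero_mul, map_zero]

theorem pairElt_eq_D (i j : ℕ) : pairElt (i, j) = D (i-1) (j-1) := rfl

theorem D_mem_V (p q : ℕ) : D p q ∈ V 2 (p+q+2) := by
  have h := br_mem_V (Bb_mem_V p) (Bb_mem_V q)
  rw [show (1:ℕ)+1 = 2 from rfl, show (p+1)+(q+1) = p+q+2 by omega] at h
  exact h

theorem pairElt_mem_V {k l : ℕ} (hk : 1 ≤ k) (hl : 1 ≤ l) :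
    pairElt (k, l) ∈ V 2 (k + l) := by
  rw [pairElt_eq_D]
  have h := D_mem_V (k-1) (l-1)
  rw [show (k-1)+(l-1)+2 = k+l by omega] at h
  exact h

theorem a_mem_L : a ∈ L := Submodule.mem_sInf.mpr fun _ hS => hS.1
theorem b_mem_L : b ∈ L := Submodule.mem_sInf.mpr fun _ hS => hS.2.1
theorem L_closed : IsBracketClosed L := fun x hx y hy =>
  Submodule.mem_sInf.mpr fun S hS =>
    hS.2.2 x (Submodule.mem_sInf.mp hx S hS) y (Submodule.mem_sInf.mp hy S hS)

theorem Bb_mem_L (m : ℕ) : Bb m ∈ L := by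
  induction m with
  | zero => exact b_mem_L
  | succ m ih => rw [Bb_succ]; exact L_closed a a_mem_L _ ih

theorem D_mem_L (p q : ℕ) : D p q ∈ L := L_closed _ (Bb_mem_L p) _ (Bb_mem_L q)

theorem coord_pairElt_zero {k l k' l' : ℕ} (hk' : 1 ≤ k') (hl' : k' ≤ l') (hk : 1 ≤ k)
    (hl : 1 ≤ l) (h : k' + l' ≠ k + l ∨ l' < l) :
    coordAt (T (l-1) (k-1)) (pairElt (k', l')) = 0 := by
  rw [pairElt_eq_D, coord_D]
  rw [if_neg (by omega), if_neg (by omega)]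
  simp

theorem coord_pairElt_self {k l : ℕ} (h : idxOK (k, l)) :
    coordAt (T (l-1) (k-1)) (pairElt (k, l)) ≠ 0 := by
  obtain ⟨hk1, hkl, hne⟩ := h
  simp only [Prod.fst, Prod.snd] at hk1 hkl hne
  rw [pairElt_eq_D, coord_D]
  rw [if_pos (show l-1 ≤ l-1 ∧ (l-1) + (k-1) = (l-1)+(k-1) from ⟨le_refl _, rfl⟩)]
  rw [show l-1-(l-1) = 0 by omega, cc_zero]
  by_cases hk : k = l
  · subst hk
    have hodd : ¬ Even k := fun he => hne ⟨rfl, he⟩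
    rw [Nat.even_iff] at hodd
    rw [if_pos (show k-1 ≤ k-1 ∧ (k-1)+(k-1) = (k-1)+(k-1) from ⟨le_refl _, rfl⟩)]
    rw [show k-1-(k-1) = 0 by omega, cc_zero]
    rw [if_pos ⟨by omega, by omega⟩]
    norm_num
  · rw [if_neg (by omega)]
    by_cases hpar : (k-1) % 2 = 0 ∧ (l-1) % 2 = 0
    · rw [if_pos hpar]; norm_num
    · rw [if_neg hpar]; norm_num

theorem pairElt_indep :
    LinearIndependent ℚ (fun p : {p : ℕ × ℕ // idxOK p} => pairElt p.1) := by
  rw [linearIndependent_iff]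
  intro c hc
  by_contra hne
  have hsupp : c.support.Nonempty := Finsupp.support_nonempty_iff.mpr hne
  obtain ⟨p, hp, hmax⟩ := Finset.exists_max_image c.support (fun r => r.1.2) hsupp
  obtain ⟨⟨k, l⟩, hok⟩ := p
  set C := coordAt (T (l-1) (k-1)) (pairElt (k, l)) with hC
  have h0 : coordAt (T (l-1) (k-1)) (Finsupp.linearCombination ℚ
      (fun p : {p : ℕ × ℕ // idxOK p} => pairElt p.1) c) = 0 := by rw [hc, map_zero]
  rw [Finsupp.linearCombination_apply, Finsupp.sum, map_sum] at h0
  have hterm : ∀ r ∈ c.support,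
      coordAt (T (l-1) (k-1)) (c r • pairElt r.1)
        = if r = ⟨(k,l), hok⟩ then c r * C else 0 := by
    intro r hr
    obtain ⟨⟨k', l'⟩, hok'⟩ := r
    rw [map_smul, smul_eq_mul]
    by_cases hr' : (⟨(k',l'), hok'⟩ : {p : ℕ × ℕ // idxOK p}) = ⟨(k,l), hok⟩
    · rw [if_pos hr']
      rw [hr']
    · rw [if_neg hr']
      have hle : l' ≤ l := hmax ⟨(k',l'), hok'⟩ hr
      have hne2 : ¬(k' = k ∧ l' = l) := fun ⟨e1, e2⟩ => hr' (by subst e1; subst e2; rfl)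
      rw [coord_pairElt_zero hok'.1 hok'.2.1 hok.1 (le_trans hok.1 hok.2.1)
        (by omega), mul_zero]
  rw [Finset.sum_congr rfl hterm, Finset.sum_ite_eq' c.support ⟨(k,l), hok⟩
    (fun r => c r * C), if_pos hp] at h0
  have hC0 : C ≠ 0 := coord_pairElt_self hok
  have : c ⟨(k,l), hok⟩ = 0 := by
    rcases mul_eq_zero.mp h0 with h | h
    · exact h
    · exact absurd h hC0
  exact Finsupp.mem_support_iff.mp hp this

/-! ### the enveloping submodule `M` and bracket closure -/

def SD : Set A := {x | ∃ p q : ℕ, x = D p q}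

def GenM : Set A := ({a, a*a} ∪ Set.range Bb ∪ SD) ∪ word '' {w | 3 ≤ w.count 1}

def M : Submodule ℚ A := Submodule.span ℚ GenM

theorem a_mem_M : a ∈ M := Submodule.subset_span (Or.inl (Or.inl (Or.inl (Or.inl rfl))))
theorem aa_mem_M : a*a ∈ M := Submodule.subset_span (Or.inl (Or.inl (Or.inl (Or.inr rfl))))
theorem Bb_mem_M (m : ℕ) : Bb m ∈ M := Submodule.subset_span (Or.inl (Or.inl (Or.inr ⟨m, rfl⟩)))
theorem D_mem_M (p q : ℕ) : D p q ∈ M := Submodule.subset_span (Or.inl (Or.inr ⟨p, q, rfl⟩))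

def W3 : Submodule ℚ A := wordsSpan fun w => 3 ≤ w.count 1

theorem W3_le_M : W3 ≤ M := Submodule.span_le.mpr fun x ⟨w, hw, hx⟩ =>
  Submodule.subset_span (Or.inr ⟨w, hw, hx⟩)

theorem br_a_val : br a a = a*a + a*a := by rw [br, pr_a]; noncomm_ring
theorem br_a_aa : br a (a*a) = 0 := by rw [br, pr_aa, pr_a]; noncomm_ring
theorem br_aa_a : br (a*a) a = 0 := by rw [br, pr_aa, pr_a]; noncomm_ring
theorem br_aa_aa : br (a*a) (a*a) = 0 := by rw [br, pr_aa]; noncomm_ring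

theorem br_a_D_mem (p q : ℕ) : br a (D p q) ∈ Submodule.span ℚ SD := by
  rw [br_a_D]
  exact Submodule.add_mem _ (Submodule.subset_span ⟨p+1, q, rfl⟩)
    (Submodule.smul_mem _ _ (Submodule.subset_span ⟨p, q+1, rfl⟩))

theorem br_a_spanSD {x : A} (hx : x ∈ Submodule.span ℚ SD) :
    br a x ∈ Submodule.span ℚ SD := by
  induction hx using Submodule.span_induction with
  | mem g hg => obtain ⟨p, q, rfl⟩ := hg; exact br_a_D_mem p q
  | zero => rw [br_zero]; exact Submodule.zero_mem _
  | add u v _ _ hu hv => rw [br_add_right]; exact Submodule.add_mem _ hu hv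
  | smul c u _ hu => rw [br_smul_right]; exact Submodule.smul_mem _ c hu

theorem spanSD_le_M : Submodule.span ℚ SD ≤ M :=
  Submodule.span_le.mpr fun x hx => Submodule.subset_span (Or.inl (Or.inr hx))

theorem mem_wordsSpan_true_of_V {k n : ℕ} {x : A} (hx : x ∈ V k n) :
    x ∈ wordsSpan fun _ => True := wordsSpan_mono (fun _ _ => trivial) hx

theorem br_W3_right {Q : List (Fin 2) → Prop} {x y : A}
    (hx : x ∈ wordsSpan Q) (hy : y ∈ W3) : br x y ∈ W3 :=
  br_mem_wordsSpan (fun u v _ hv => by simp [List.count_append]; omega)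
    (fun u v hu _ => by simp [List.count_append]; omega) hx hy

theorem br_W3_left {Q : List (Fin 2) → Prop} {x y : A}
    (hx : x ∈ W3) (hy : y ∈ wordsSpan Q) : br x y ∈ W3 :=
  br_mem_wordsSpan (fun u v hu _ => by simp [List.count_append]; omega)
    (fun u v _ hv => by simp [List.count_append]; omega) hx hy

theorem br_count3 {k m k' m' : ℕ} {x y : A} (hx : x ∈ V k m) (hy : y ∈ V k' m')
    (h : 3 ≤ k + k') : br x y ∈ W3 :=
  br_mem_wordsSpan (fun u v hu hv => by simp [List.count_append, hu.1, hv.1]; omega)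
    (fun u v hu hv => by simp [List.count_append, hu.1, hv.1]; omega) hx hy

theorem GenM_le_true : ∀ g ∈ GenM, g ∈ wordsSpan fun _ => True := by
  rintro g (((hg | hg) | hg) | hg)
  · rcases hg with rfl | rfl
    · exact mem_wordsSpan_true_of_V a_mem_V
    · exact mem_wordsSpan_true_of_V (mul_mem_V a_mem_V a_mem_V)
  · obtain ⟨m, rfl⟩ := hg; exact mem_wordsSpan_true_of_V (Bb_mem_V m)
  · obtain ⟨p, q, rfl⟩ := hg; exact mem_wordsSpan_true_of_V (D_mem_V p q)
  · obtain ⟨w, _, rfl⟩ := hg; exact word_mem_wordsSpan trivial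

theorem GenM_br : ∀ g ∈ GenM, ∀ g' ∈ GenM, br g g' ∈ M := by
  intro g hg g' hg'
  rcases hg with ((hg | hg) | hg) | hg
  · -- g ∈ {a, a*a}
    rcases hg with rfl | rfl
    · -- g = a
      rcases hg' with ((hg' | hg') | hg') | hg'
      · rcases hg' with rfl | rfl
        · rw [br_a_val]; exact Submodule.add_mem _ aa_mem_M aa_mem_M
        · rw [br_a_aa]; exact Submodule.zero_mem _
      · obtain ⟨m, rfl⟩ := hg'; rw [← Bb_succ]; exact Bb_mem_M (m+1)
      · obtain ⟨p, q, rfl⟩ := hg'; exact spanSD_le_M (br_a_D_mem p q)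
      · obtain ⟨w, hw, rfl⟩ := hg'
        exact W3_le_M (br_W3_right (mem_wordsSpan_true_of_V a_mem_V)
          (word_mem_wordsSpan hw))
    · -- g = a*a
      rcases hg' with ((hg' | hg') | hg') | hg'
      · rcases hg' with rfl | rfl
        · rw [br_aa_a]; exact Submodule.zero_mem _
        · rw [br_aa_aa]; exact Submodule.zero_mem _
      · obtain ⟨m, rfl⟩ := hg'
        rw [br_aa_eq (Bb_mem_V m), ← Bb_succ, ← Bb_succ]; exact Bb_mem_M (m+2)
      · obtain ⟨p, q, rfl⟩ := hg'
        rw [br_aa_eq (D_mem_V p q)]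
        exact spanSD_le_M (br_a_spanSD (br_a_D_mem p q))
      · obtain ⟨w, hw, rfl⟩ := hg'
        exact W3_le_M (br_W3_right (mem_wordsSpan_true_of_V (mul_mem_V a_mem_V a_mem_V))
          (word_mem_wordsSpan hw))
  · -- g = Bb m
    obtain ⟨m, rfl⟩ := hg
    rcases hg' with ((hg' | hg') | hg') | hg'
    · rcases hg' with rfl | rfl
      · -- br (Bb m) a
        have h := pr_V (Bb_mem_V m)
        by_cases hm : Odd (m+1)
        · rw [if_pos hm] at h
          rw [br_x_a_odd h, ← Bb_succ]; exact Bb_mem_M (m+1)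
        · rw [if_neg hm] at h
          rw [br_x_a_even h, ← Bb_succ]; exact Submodule.neg_mem _ (Bb_mem_M (m+1))
      · rw [br_x_aa, br_aa_eq (Bb_mem_V m), ← Bb_succ, ← Bb_succ]
        exact Submodule.neg_mem _ (Bb_mem_M (m+2))
    · obtain ⟨m', rfl⟩ := hg'; exact D_mem_M m m'
    · obtain ⟨p, q, rfl⟩ := hg'
      exact W3_le_M (br_count3 (Bb_mem_V m) (D_mem_V p q) (by omega))
    · obtain ⟨w, hw, rfl⟩ := hg'
      exact W3_le_M (br_W3_right (mem_wordsSpan_true_of_V (Bb_mem_V m))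
        (word_mem_wordsSpan hw))
  · -- g = D p q
    obtain ⟨p, q, rfl⟩ := hg
    rcases hg' with ((hg' | hg') | hg') | hg'
    · rcases hg' with rfl | rfl
      · have h := pr_V (D_mem_V p q)
        by_cases hm : Odd (p+q+2)
        · rw [if_pos hm] at h
          rw [br_x_a_odd h]; exact spanSD_le_M (br_a_D_mem p q)
        · rw [if_neg hm] at h
          rw [br_x_a_even h]
          exact Submodule.neg_mem _ (spanSD_le_M (br_a_D_mem p q))
      · rw [br_x_aa, br_aa_eq (D_mem_V p q)]
        exact Submodule.neg_mem _ (spanSD_le_M (br_a_spanSD (br_a_D_mem p q)))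
    · obtain ⟨m', rfl⟩ := hg'
      exact W3_le_M (br_count3 (D_mem_V p q) (Bb_mem_V m') (by omega))
    · obtain ⟨p', q', rfl⟩ := hg'
      exact W3_le_M (br_count3 (D_mem_V p q) (D_mem_V p' q') (by omega))
    · obtain ⟨w, hw, rfl⟩ := hg'
      exact W3_le_M (br_W3_right (mem_wordsSpan_true_of_V (D_mem_V p q))
        (word_mem_wordsSpan hw))
  · -- g = word w, 3 ≤ count
    obtain ⟨w, hw, rfl⟩ := hg
    exact W3_le_M (br_W3_left (word_mem_wordsSpan hw) (GenM_le_true g' hg'))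

theorem M_closed : IsBracketClosed M := fun x hx y hy => br_span_mem GenM_br hx hy

theorem L_le_M : L ≤ M := sInf_le ⟨a_mem_M, Bb_mem_M 0, M_closed⟩

/-! ### spans of admissible pair elements -/

def SPn (n : ℕ) : Submodule ℚ A :=
  Submodule.span ℚ {x : A | ∃ p : ℕ × ℕ, idxOK p ∧ p.1 + p.2 = n ∧ x = pairElt p}

def SP : Submodule ℚ A :=
  Submodule.span ℚ (Set.range fun p : {p : ℕ × ℕ // idxOK p} => pairElt p.1)

theorem SPn_le_SP (n : ℕ) : SPn n ≤ SP :=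
  Submodule.span_le.mpr fun x ⟨p, hp, _, hx⟩ =>
    Submodule.subset_span ⟨⟨p, hp⟩, hx.symm⟩

theorem D_mem_SPn (p q : ℕ) : D p q ∈ SPn (p + q + 2) := by
  have h1 := pr_V (Bb_mem_V p)
  have h2 := pr_V (Bb_mem_V q)
  rcases lt_trichotomy p q with hpq | rfl | hpq
  · refine Submodule.subset_span ⟨(p+1, q+1), ⟨by omega, by omega, ?_⟩, by omega, ?_⟩
    · rintro ⟨e, _⟩; omega
    · rw [pairElt_eq_D]; norm_num
  · by_cases hodd : Odd (p+1)
    · refine Submodule.subset_span ⟨(p+1, p+1), ⟨by omega, le_refl _, ?_⟩, by omega, ?_⟩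
      · rintro ⟨_, he⟩; rw [Nat.even_iff] at he; rw [Nat.odd_iff] at hodd; omega
      · rw [pairElt_eq_D]; norm_num
    · rw [if_neg hodd] at h1
      rw [D, br_self_of_pr_zero h1]
      exact Submodule.zero_mem _
  · have hmem : pairElt (q+1, p+1) ∈ SPn (p+q+2) := by
      refine Submodule.subset_span ⟨(q+1, p+1), ⟨by omega, by omega, ?_⟩, by omega, rfl⟩
      rintro ⟨e, _⟩; omega
    rw [pairElt_eq_D] at hmem; norm_num at hmem
    by_cases ho1 : Odd (p+1) <;> by_cases ho2 : Odd (q+1)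
    · rw [if_pos ho1] at h1; rw [if_pos ho2] at h2
      rw [D, br_swap_odd h1 h2, ← D]; exact hmem
    · rw [if_neg ho2] at h2
      rw [D, br_swap_of_pr_zero h2, ← D]
      exact Submodule.neg_mem _ hmem
    · rw [if_neg ho1] at h1
      have hsw : br (Bb q) (Bb p) = - br (Bb p) (Bb q) := br_swap_of_pr_zero h1
      have : br (Bb p) (Bb q) = - br (Bb q) (Bb p) := by rw [hsw, neg_neg]
      rw [D, this, ← D]
      exact Submodule.neg_mem _ hmem
    · rw [if_neg ho2] at h2
      rw [D, br_swap_of_pr_zero h2, ← D]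
      exact Submodule.neg_mem _ hmem

/-! ### projection arguments -/

theorem projM_SPn (n : ℕ) {x : A} (hx : x ∈ M) :
    projL (fun w => w.count 1 = 2 ∧ w.length = n) x ∈ SPn n := by
  induction hx using Submodule.span_induction with
  | mem g hg =>
      rcases hg with (((hg | hg) | hg) | hg) | hg
      · subst hg
        rw [projL_eq_zero a_mem_V
          (fun w hw hQ => by obtain ⟨h1, _⟩ := hw; obtain ⟨h2, _⟩ := hQ; omega)]
        exact Submodule.zero_mem _
      · subst hg
        rw [projL_eq_zero (mul_mem_V a_mem_V a_mem_V)
          (fun w hw hQ => by obtain ⟨h1, _⟩ := hw; obtain ⟨h2, _⟩ := hQ; omega)]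
        exact Submodule.zero_mem _
      · obtain ⟨m, rfl⟩ := hg
        rw [projL_eq_zero (Bb_mem_V m)
          (fun w hw hQ => by obtain ⟨h1, _⟩ := hw; obtain ⟨h2, _⟩ := hQ; omega)]
        exact Submodule.zero_mem _
      · obtain ⟨p, q, rfl⟩ := hg
        by_cases h : p + q + 2 = n
        · subst h
          rw [projL_eq_self (D_mem_V p q)]
          exact D_mem_SPn p q
        · rw [projL_eq_zero (D_mem_V p q)
            (fun w hw hQ => by obtain ⟨_, h1⟩ := hw; obtain ⟨_, h2⟩ := hQ; omega)]
          exact Submodule.zero_mem _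
      · obtain ⟨w, hw, rfl⟩ := hg
        rw [projL_eq_zero (word_mem_wordsSpan hw)
          (fun w' hw' hQ => by obtain ⟨h1, _⟩ := hQ; simp only [Set.mem_setOf_eq] at hw'; omega)]
        exact Submodule.zero_mem _
  | zero => rw [map_zero]; exact Submodule.zero_mem _
  | add u v _ _ hu hv => rw [map_add]; exact Submodule.add_mem _ hu hv
  | smul c u _ hu => rw [map_smul]; exact Submodule.smul_mem _ c hu

theorem projM_SP {x : A} (hx : x ∈ M) :
    projL (fun w => w.count 1 = 2) x ∈ SP := by
  induction hx using Submodule.span_induction with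
  | mem g hg =>
      rcases hg with (((hg | hg) | hg) | hg) | hg
      · subst hg
        rw [projL_eq_zero a_mem_V (fun w hw hQ => by obtain ⟨h1, _⟩ := hw; omega)]
        exact Submodule.zero_mem _
      · subst hg
        rw [projL_eq_zero (mul_mem_V a_mem_V a_mem_V)
          (fun w hw hQ => by obtain ⟨h1, _⟩ := hw; omega)]
        exact Submodule.zero_mem _
      · obtain ⟨m, rfl⟩ := hg
        rw [projL_eq_zero (Bb_mem_V m) (fun w hw hQ => by obtain ⟨h1, _⟩ := hw; omega)]
        exact Submodule.zero_mem _
      · obtain ⟨p, q, rfl⟩ := hg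
        rw [projL_eq_self (wordsSpan_mono (fun w hw => hw.1) (D_mem_V p q))]
        exact SPn_le_SP _ (D_mem_SPn p q)
      · obtain ⟨w, hw, rfl⟩ := hg
        rw [projL_eq_zero (word_mem_wordsSpan hw)
          (fun w' hw' hQ => by simp only [Set.mem_setOf_eq] at hw'; omega)]
        exact Submodule.zero_mem _
  | zero => rw [map_zero]; exact Submodule.zero_mem _
  | add u v _ _ hu hv => rw [map_add]; exact Submodule.add_mem _ hu hv
  | smul c u _ hu => rw [map_smul]; exact Submodule.smul_mem _ c hu

end Omnibus

open Omnibus in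
/-- The family `⁅ad(a)^{i−1}(b), ad(a)^{j−1}(b)⁆` over admissible pairs `(i,j)` is linearly
independent and spans `L^{(2)}`; the element indexed by `(i,j)` lies in `L^{(2,i+j)}`, and for
each `n ≥ 2` the elements with `i + j = n` form a `ℚ`-basis of `L^{(2,n)}`. -/
theorem basis_wordLengthTwoInB :
    LinearIndependent ℚ (fun p : {p : ℕ × ℕ // idxOK p} => pairElt p.1) ∧
    Submodule.span ℚ (Set.range fun p : {p : ℕ × ℕ // idxOK p} => pairElt p.1) = (Lk 2 : Submodule ℚ A) ∧
    (∀ p : {p : ℕ × ℕ // idxOK p}, pairElt p.1 ∈ Lkn 2 (p.1.1 + p.1.2)) ∧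
    ∀ n : ℕ, 2 ≤ n →
      Submodule.span ℚ {x : A | ∃ p : ℕ × ℕ, idxOK p ∧ p.1 + p.2 = n ∧ x = pairElt p} =
        Lkn 2 n := by
  have part3 : ∀ p : {p : ℕ × ℕ // idxOK p}, pairElt p.1 ∈ Lkn 2 (p.1.1 + p.1.2) := by
    rintro ⟨⟨k, l⟩, hok⟩
    refine Submodule.mem_inf.mpr ⟨?_, ?_⟩
    · rw [show pairElt ((⟨(k,l),hok⟩ : {p : ℕ × ℕ // idxOK p}) : ℕ × ℕ) = D (k-1) (l-1) from rfl]
      exact D_mem_L _ _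
    · exact pairElt_mem_V hok.1 (le_trans hok.1 hok.2.1)
  refine ⟨pairElt_indep, ?_, part3, ?_⟩
  · apply le_antisymm
    · rw [Submodule.span_le]
      rintro x ⟨p, rfl⟩
      have h := Submodule.mem_inf.mp (part3 p)
      exact Submodule.mem_inf.mpr ⟨h.1, wordsSpan_mono (fun w hw => hw.1) h.2⟩
    · intro x hx
      obtain ⟨hxL, hx2⟩ := Submodule.mem_inf.mp hx
      have h := projM_SP (L_le_M hxL)
      rwa [projL_eq_self hx2] at h
  · intro n _
    apply le_antisymm
    · rw [Submodule.span_le]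
      rintro x ⟨p, hok, hsum, rfl⟩
      have h := part3 ⟨p, hok⟩
      rw [show ((⟨p, hok⟩ : {p : ℕ × ℕ // idxOK p}) : ℕ × ℕ).1 + (⟨p, hok⟩ : {p : ℕ × ℕ // idxOK p}).1.2 = n from hsum] at h
      exact h
    · intro x hx
      obtain ⟨hxL, hx2⟩ := Submodule.mem_inf.mp hx
      have h := projM_SPn n (L_le_M hxL)
      rwa [projL_eq_self hx2] at h
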